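/- Fix real parameters B₀ > 0, B̃ > B₀ and 0 < q₂ < q₁ < 1. For j ∈ ℤ set m_j := (2j+1)/2; define r(j) := sqrt(4 B̃ m_j / ((q₁² − q₂²) B₀²)) if m_j ≥ 0 and r(j) := 0 if m_j < 0; and for r > 0 define ρ(r, j) := (q₂ B₀ / 4)(r² − r(j)²) if m_j ≥ 0 and r ≥ r(j), ρ(r, j) := q₂ B₀ r² / 4 if m_j < 0, and ρ(r, j) := 0 if m_j ≥ 0 and r < r(j). Let δ ∈ (0, 1), M > 1, and set α := δ q₂ (1 − 1/M). Let F : (0, ∞) × ℤ → [0, ∞) be measurable such that Σ_{j ∈ ℤ} ∫₀^∞ e^{2δρ(r,j)} F(r, j) dr < ∞ and, for every γ > 0, Σ_{j ∈ ℤ} ∫₀^∞ e^{2γ|m_j|} F(r, j) dr < ∞. Then Σ_{j ∈ ℤ} ∫₀^∞ e^{α B₀ r² / 2} F(r, j) dr < ∞. -/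

import Mathlib

open MeasureTheory

set_option maxHeartbeats 1000000

/-- Combination step of the Gaussian-localization proof: if
`Σ_j ∫ e^{2δρ(r,j)} F(r,j) dr < ∞` and `Σ_j ∫ e^{2γ|m_j|} F(r,j) dr < ∞` for every `γ > 0`,
then `Σ_j ∫ e^{α B₀ r²/2} F(r,j) dr < ∞` with `α = δ q₂ (1 - 1/M)`. -/
theorem stmt_15 (B₀ Bt q₁ q₂ : ℝ) (hB₀ : 0 < B₀) (hBt : B₀ < Bt)
    (hq₂ : 0 < q₂) (hq₁₂ : q₂ < q₁) (hq₁ : q₁ < 1)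
    (m : ℤ → ℝ) (hm : ∀ j : ℤ, m j = (2 * j + 1) / 2)
    (rr : ℤ → ℝ)
    (hrr : ∀ j : ℤ, rr j =
      if 0 ≤ m j then Real.sqrt (4 * Bt * m j / ((q₁ ^ 2 - q₂ ^ 2) * B₀ ^ 2)) else 0)
    (ρ : ℝ → ℤ → ℝ)
    (hρ : ∀ r : ℝ, ∀ j : ℤ, ρ r j =
      if 0 ≤ m j then
        (if rr j ≤ r then q₂ * B₀ / 4 * (r ^ 2 - rr j ^ 2) else 0)
      else q₂ * B₀ * r ^ 2 / 4)
    (δ M : ℝ) (hδ₀ : 0 < δ) (hδ₁ : δ < 1) (hM : 1 < M)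
    (α : ℝ) (hα : α = δ * q₂ * (1 - 1 / M))
    (F : ℝ → ℤ → ℝ) (hFmeas : ∀ j : ℤ, Measurable fun r => F r j)
    (hFpos : ∀ r : ℝ, ∀ j : ℤ, 0 ≤ F r j)
    (h1 : (∑' j : ℤ, ∫⁻ r in Set.Ioi (0:ℝ),
      ENNReal.ofReal (Real.exp (2 * δ * ρ r j) * F r j)) < ⊤)
    (h2 : ∀ γ > 0, (∑' j : ℤ, ∫⁻ r in Set.Ioi (0:ℝ),
      ENNReal.ofReal (Real.exp (2 * γ * |m j|) * F r j)) < ⊤) :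
    (∑' j : ℤ, ∫⁻ r in Set.Ioi (0:ℝ),
      ENNReal.ofReal (Real.exp (α * B₀ * r ^ 2 / 2) * F r j)) < ⊤ := by
  have hD : 0 < q₁ ^ 2 - q₂ ^ 2 := by nlinarith
  have hBt0 : 0 < Bt := lt_trans hB₀ hBt
  have hM0 : (0:ℝ) < M := lt_trans one_pos hM
  have hα0 : 0 < α := by
    have h1M : 0 < 1 - 1 / M := by
      have : 1 / M < 1 := by rw [div_lt_one hM0]; exact hM
      linarith
    rw [hα]
    exact mul_pos (mul_pos hδ₀ hq₂) h1M
  set γ : ℝ := α * M * Bt / ((q₁ ^ 2 - q₂ ^ 2) * B₀) with hγdef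
  have hγ0 : 0 < γ := by positivity
  have hαM : α * M = δ * q₂ * (M - 1) := by
    rw [hα]; field_simp
  have hαle : α ≤ δ * q₂ := by
    nlinarith [hαM]
  -- pointwise bound on (0,∞)
  have key : ∀ j : ℤ, ∀ r ∈ Set.Ioi (0:ℝ),
      Real.exp (α * B₀ * r ^ 2 / 2) ≤
        Real.exp (2 * δ * ρ r j) + Real.exp (2 * γ * |m j|) := by
    intro j r hr
    have hr0 : 0 < r := hr
    rcases le_or_gt 0 (m j) with hmj | hmj
    · have hc : 0 ≤ 4 * Bt * m j / ((q₁ ^ 2 - q₂ ^ 2) * B₀ ^ 2) := by positivity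
      have hrrj : rr j = Real.sqrt (4 * Bt * m j / ((q₁ ^ 2 - q₂ ^ 2) * B₀ ^ 2)) := by
        rw [hrr]; simp [hmj]
      have hrr0 : 0 ≤ rr j := by rw [hrrj]; exact Real.sqrt_nonneg _
      have hrr2 : rr j ^ 2 = 4 * Bt * m j / ((q₁ ^ 2 - q₂ ^ 2) * B₀ ^ 2) := by
        rw [hrrj]; exact Real.sq_sqrt hc
      rcases le_or_gt (M * rr j ^ 2) (r ^ 2) with h | h
      · have hrge : rr j ≤ r := by nlinarith
        have hρeq : ρ r j = q₂ * B₀ / 4 * (r ^ 2 - rr j ^ 2) := by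
          rw [hρ]; simp [hmj, hrge]
        have hab : α * B₀ * r ^ 2 / 2 ≤ 2 * δ * ρ r j := by
          rw [hρeq]
          have h1' : δ * q₂ * B₀ * (r ^ 2 - M * rr j ^ 2) ≥ 0 := by
            have : 0 ≤ δ * q₂ * B₀ := by positivity
            nlinarith
          have hgoalM : (2 * δ * (q₂ * B₀ / 4 * (r ^ 2 - rr j ^ 2)) - α * B₀ * r ^ 2 / 2) * M
              = δ * q₂ * B₀ * (r ^ 2 - M * rr j ^ 2) / 2 := by
            linear_combination (-(B₀ * r ^ 2 / 2)) * hαM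
          have hpos : 0 ≤ (2 * δ * (q₂ * B₀ / 4 * (r ^ 2 - rr j ^ 2)) - α * B₀ * r ^ 2 / 2) * M := by
            rw [hgoalM]; positivity
          nlinarith [hpos, hM0]
        calc Real.exp (α * B₀ * r ^ 2 / 2) ≤ Real.exp (2 * δ * ρ r j) :=
              Real.exp_le_exp.mpr hab
          _ ≤ _ := le_add_of_nonneg_right (Real.exp_pos _).le
      · have hmabs : |m j| = m j := abs_of_nonneg hmj
        have hab : α * B₀ * r ^ 2 / 2 ≤ 2 * γ * |m j| := by
          rw [hmabs]
          have h2' : α * B₀ * r ^ 2 / 2 ≤ α * B₀ * (M * rr j ^ 2) / 2 := by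
            have hh := mul_le_mul_of_nonneg_left h.le (show (0:ℝ) ≤ α * B₀ / 2 by positivity)
            nlinarith [hh]
          have h3' : α * B₀ * (M * rr j ^ 2) / 2 = 2 * γ * m j := by
            rw [hrr2, hγdef]
            field_simp
            ring
          linarith [h2', h3'.le]
        calc Real.exp (α * B₀ * r ^ 2 / 2) ≤ Real.exp (2 * γ * |m j|) :=
              Real.exp_le_exp.mpr hab
          _ ≤ _ := le_add_of_nonneg_left (Real.exp_pos _).le
    · have hρeq : ρ r j = q₂ * B₀ * r ^ 2 / 4 := by
        rw [hρ]; simp [not_le.mpr hmj]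
      have hab : α * B₀ * r ^ 2 / 2 ≤ 2 * δ * ρ r j := by
        rw [hρeq]
        nlinarith [mul_nonneg (mul_nonneg (mul_nonneg (sub_nonneg.mpr hαle) hB₀.le) (sq_nonneg r)) (by norm_num : (0:ℝ) ≤ (1:ℝ)/2)]
      calc Real.exp (α * B₀ * r ^ 2 / 2) ≤ Real.exp (2 * δ * ρ r j) :=
            Real.exp_le_exp.mpr hab
        _ ≤ _ := le_add_of_nonneg_right (Real.exp_pos _).le
  -- measurability of ρ
  have hρmeas : ∀ j : ℤ, Measurable fun r => ρ r j := by
    intro j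
    have heq : (fun r => ρ r j) = fun r =>
        if 0 ≤ m j then
          (if rr j ≤ r then q₂ * B₀ / 4 * (r ^ 2 - rr j ^ 2) else 0)
        else q₂ * B₀ * r ^ 2 / 4 := funext fun r => hρ r j
    rw [heq]
    by_cases hmj : 0 ≤ m j
    · simp only [hmj, if_true]
      exact Measurable.ite (measurableSet_le measurable_const measurable_id)
        (by fun_prop) measurable_const
    · simp only [hmj, if_false]
      fun_prop
  -- integral bound per j
  have hint : ∀ j : ℤ,
      (∫⁻ r in Set.Ioi (0:ℝ), ENNReal.ofReal (Real.exp (α * B₀ * r ^ 2 / 2) * F r j)) ≤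
      (∫⁻ r in Set.Ioi (0:ℝ), ENNReal.ofReal (Real.exp (2 * δ * ρ r j) * F r j)) +
      (∫⁻ r in Set.Ioi (0:ℝ), ENNReal.ofReal (Real.exp (2 * γ * |m j|) * F r j)) := by
    intro j
    have hmeas1 : Measurable fun r => ENNReal.ofReal (Real.exp (2 * δ * ρ r j) * F r j) := by
      apply ENNReal.measurable_ofReal.comp
      exact ((Real.measurable_exp.comp ((hρmeas j).const_mul _)).mul (hFmeas j))
    have hmeas2 : Measurable fun r => ENNReal.ofReal (Real.exp (2 * γ * |m j|) * F r j) := by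
      apply ENNReal.measurable_ofReal.comp
      exact measurable_const.mul (hFmeas j)
    rw [← lintegral_add_left hmeas1]
    apply setLIntegral_mono (hmeas1.add hmeas2)
    intro r hr
    simp only [Pi.add_apply]
    rw [← ENNReal.ofReal_add (mul_nonneg (Real.exp_pos _).le (hFpos r j)) (mul_nonneg (Real.exp_pos _).le (hFpos r j))]
    apply ENNReal.ofReal_le_ofReal
    have hk := mul_le_mul_of_nonneg_right (key j r hr) (hFpos r j)
    linarith [hk]
  calc (∑' j : ℤ, ∫⁻ r in Set.Ioi (0:ℝ),
      ENNReal.ofReal (Real.exp (α * B₀ * r ^ 2 / 2) * F r j))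
      ≤ ∑' j : ℤ, ((∫⁻ r in Set.Ioi (0:ℝ), ENNReal.ofReal (Real.exp (2 * δ * ρ r j) * F r j)) +
        (∫⁻ r in Set.Ioi (0:ℝ), ENNReal.ofReal (Real.exp (2 * γ * |m j|) * F r j))) :=
        ENNReal.tsum_le_tsum hint
    _ = (∑' j : ℤ, ∫⁻ r in Set.Ioi (0:ℝ), ENNReal.ofReal (Real.exp (2 * δ * ρ r j) * F r j)) +
        (∑' j : ℤ, ∫⁻ r in Set.Ioi (0:ℝ), ENNReal.ofReal (Real.exp (2 * γ * |m j|) * F r j)) :=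
        ENNReal.tsum_add
    _ < ⊤ := ENNReal.add_lt_top.mpr ⟨h1, h2 γ hγ0⟩
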